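/- The l1 IQ coherence is multiplicative in the sense: for bipartite density operators ρ_{A1B1} and ρ_{A2B2}, one has 1 + C^{A1A2|B1B2}_{l1}(ρ_{A1B1} ⊗ ρ_{A2B2}) = (1 + C^{A1|B1}_{l1}(ρ_{A1B1}))·(1 + C^{A2|B2}_{l1}(ρ_{A2B2})). -/

import Mathlib

open scoped BigOperators ComplexOrder Kronecker

/-- Trace norm: `‖P‖_tr = Tr √(Pᴴ P)`. -/
noncomputable def traceNorm {n : Type*} [Fintype n] [DecidableEq n] (P : Matrix n n ℂ) : ℝ :=
  (((Matrix.posSemidef_conjTranspose_mul_self P).1.eigenvectorUnitary.1 *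
    Matrix.diagonal (((↑) : ℝ → ℂ) ∘ (Real.sqrt ∘ (Matrix.posSemidef_conjTranspose_mul_self P).1.eigenvalues)) *
    (star (Matrix.posSemidef_conjTranspose_mul_self P).1.eigenvectorUnitary : Matrix n n ℂ)).trace).re

/-- The B-blocks of an operator on H_A ⊗ H_B. -/
def blockB {A B : Type*} (Q : Matrix (A × B) (A × B) ℂ) (i j : A) : Matrix B B ℂ :=
  fun b b' => Q (i, b) (j, b')

/-- l1 norm of IQ coherence: C^{A|B}_{l1}(ρ) = Σ_{i≠j} ‖ρ^B_{ij}‖_tr. -/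
noncomputable def CIQl1 {A B : Type*} [Fintype A] [Fintype B] [DecidableEq A] [DecidableEq B]
    (ρ : Matrix (A × B) (A × B) ℂ) : ℝ :=
  ∑ i, ∑ j, if i = j then 0 else traceNorm (blockB ρ i j)

/-- Tensor product of bipartite operators, with the A-systems and B-systems grouped:
(ρ₁ ⊗ ρ₂) on ((A₁×A₂) × (B₁×B₂)). -/
def tensBip {A₁ B₁ A₂ B₂ : Type*} (ρ₁ : Matrix (A₁ × B₁) (A₁ × B₁) ℂ)
    (ρ₂ : Matrix (A₂ × B₂) (A₂ × B₂) ℂ) :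
    Matrix ((A₁ × A₂) × (B₁ × B₂)) ((A₁ × A₂) × (B₁ × B₂)) ℂ :=
  fun p q => ρ₁ (p.1.1, p.2.1) (q.1.1, q.2.1) * ρ₂ (p.1.2, p.2.2) (q.1.2, q.2.2)

open scoped MatrixOrder

lemma traceNorm_eq_sqrt {n : Type*} [Fintype n] [DecidableEq n] (P : Matrix n n ℂ) :
    traceNorm P = (CFC.sqrt (P.conjTranspose * P)).trace.re := by
  have hP := Matrix.posSemidef_conjTranspose_mul_self P
  rw [CFC.sqrt_eq_cfc, cfc_nnreal_eq_real _ _ hP.nonneg, hP.1.cfc_eq, traceNorm]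
  simp only [Matrix.IsHermitian.cfc, Unitary.conjStarAlgAut_apply, Real.coe_sqrt,
    Real.coe_toNNReal']
  have hs : (fun x : ℝ => √(max x 0)) = Real.sqrt := by
    funext x
    rcases le_total x 0 with h | h
    · simp [h, Real.sqrt_eq_zero'.mpr h]
    · simp [h]
  rw [hs]
  rfl

lemma conjTranspose_kron {m n : Type*} (A : Matrix m m ℂ) (B : Matrix n n ℂ) :
    (A ⊗ₖ B).conjTranspose = A.conjTranspose ⊗ₖ B.conjTranspose := by
  ext ⟨a,b⟩ ⟨c,d⟩
  simp [Matrix.conjTranspose_apply, Matrix.kroneckerMap_apply, mul_comm]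

lemma posSemidef_kron {m n : Type*} [Fintype m] [Fintype n] [DecidableEq m] [DecidableEq n]
    {P : Matrix m m ℂ} {Q : Matrix n n ℂ} (hP : P.PosSemidef) (hQ : Q.PosSemidef) :
    (P ⊗ₖ Q).PosSemidef := by
  obtain ⟨A, rfl⟩ := CStarAlgebra.nonneg_iff_eq_star_mul_self.mp hP.nonneg
  obtain ⟨B, rfl⟩ := CStarAlgebra.nonneg_iff_eq_star_mul_self.mp hQ.nonneg
  rw [Matrix.mul_kronecker_mul, Matrix.star_eq_conjTranspose, Matrix.star_eq_conjTranspose,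
    ← conjTranspose_kron]
  exact Matrix.posSemidef_conjTranspose_mul_self _

lemma trace_im_psd {n : Type*} [Fintype n] {P : Matrix n n ℂ} (hP : P.PosSemidef) :
    P.trace.im = 0 := by
  have h : star P.trace = P.trace := by
    rw [← Matrix.trace_conjTranspose, hP.1]
  exact Complex.conj_eq_iff_im.mp h

lemma traceNorm_kron {m n : Type*} [Fintype m] [Fintype n] [DecidableEq m] [DecidableEq n]
    (A : Matrix m m ℂ) (B : Matrix n n ℂ) :
    traceNorm (A ⊗ₖ B) = traceNorm A * traceNorm B := by
  have hA := Matrix.posSemidef_conjTranspose_mul_self A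
  have hB := Matrix.posSemidef_conjTranspose_mul_self B
  have hAB := Matrix.posSemidef_conjTranspose_mul_self (A ⊗ₖ B)
  have sA : (CFC.sqrt (A.conjTranspose * A)).PosSemidef :=
    Matrix.nonneg_iff_posSemidef.mp (CFC.sqrt_nonneg _)
  have sB : (CFC.sqrt (B.conjTranspose * B)).PosSemidef :=
    Matrix.nonneg_iff_posSemidef.mp (CFC.sqrt_nonneg _)
  have hsq : CFC.sqrt (A.conjTranspose * A) ⊗ₖ CFC.sqrt (B.conjTranspose * B) =
      CFC.sqrt ((A ⊗ₖ B).conjTranspose * (A ⊗ₖ B)) := by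
    refine (CFC.sqrt_unique ?_ (posSemidef_kron sA sB).nonneg).symm
    rw [← Matrix.mul_kronecker_mul, ← pow_two, ← pow_two, CFC.sq_sqrt _ hA.nonneg,
      CFC.sq_sqrt _ hB.nonneg, conjTranspose_kron, Matrix.mul_kronecker_mul]
  rw [traceNorm_eq_sqrt, traceNorm_eq_sqrt, traceNorm_eq_sqrt, ← hsq, Matrix.trace_kronecker,
    Complex.mul_re, trace_im_psd sA,
    trace_im_psd sB]
  ring

lemma traceNorm_psd {n : Type*} [Fintype n] [DecidableEq n] {P : Matrix n n ℂ}
    (hP : P.PosSemidef) : traceNorm P = P.trace.re := by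
  have h : P = CFC.sqrt (P.conjTranspose * P) := by
    refine (CFC.sqrt_unique ?_ hP.nonneg).symm
    rw [hP.1]
  rw [traceNorm_eq_sqrt, ← h]

lemma blockB_psd {A B : Type*} [Fintype A] [Fintype B] {ρ : Matrix (A × B) (A × B) ℂ}
    (hρ : ρ.PosSemidef) (i : A) : (blockB ρ i i).PosSemidef :=
  hρ.submatrix (fun b => (i, b))

lemma sum_diag_traceNorm {A B : Type*} [Fintype A] [Fintype B] [DecidableEq A] [DecidableEq B]
    {ρ : Matrix (A × B) (A × B) ℂ} (hρ : ρ.PosSemidef) (hTr : ρ.trace = 1) :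
    ∑ i, traceNorm (blockB ρ i i) = 1 := by
  have h : ∀ i, traceNorm (blockB ρ i i) = (blockB ρ i i).trace.re :=
    fun i => traceNorm_psd (blockB_psd hρ i)
  simp_rw [h]
  rw [← Complex.re_sum]
  have : ∑ i, (blockB ρ i i).trace = ρ.trace := by
    simp [Matrix.trace, Matrix.diag, blockB, Fintype.sum_prod_type]
  rw [this, hTr, Complex.one_re]

lemma one_add_CIQl1 {A B : Type*} [Fintype A] [Fintype B] [DecidableEq A] [DecidableEq B]
    {ρ : Matrix (A × B) (A × B) ℂ} (hρ : ρ.PosSemidef) (hTr : ρ.trace = 1) :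
    1 + CIQl1 ρ = ∑ i, ∑ j, traceNorm (blockB ρ i j) := by
  have h1 : ∑ i, ∑ j, traceNorm (blockB ρ i j) =
      ∑ i, ∑ j, ((if i = j then 0 else traceNorm (blockB ρ i j)) +
        (if i = j then traceNorm (blockB ρ i j) else 0)) := by
    refine Finset.sum_congr rfl fun i _ => Finset.sum_congr rfl fun j _ => ?_
    by_cases h : i = j <;> simp [h]
  simp_rw [h1, Finset.sum_add_distrib]
  rw [← CIQl1]
  have h2 : ∑ i, ∑ j, (if i = j then traceNorm (blockB ρ i j) else 0)
      = ∑ i, traceNorm (blockB ρ i i) := by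
    apply Finset.sum_congr rfl
    intro i _
    simp
  rw [h2, sum_diag_traceNorm hρ hTr, add_comm]

lemma blockB_tens {A₁ B₁ A₂ B₂ : Type*} (ρ₁ : Matrix (A₁ × B₁) (A₁ × B₁) ℂ)
    (ρ₂ : Matrix (A₂ × B₂) (A₂ × B₂) ℂ) (i j : A₁ × A₂) :
    blockB (tensBip ρ₁ ρ₂) i j = (blockB ρ₁ i.1 j.1) ⊗ₖ (blockB ρ₂ i.2 j.2) := by
  ext ⟨b1, b2⟩ ⟨b1', b2'⟩
  rfl

/-- multiplicativity:
1 + C^{A₁A₂|B₁B₂}_{l1}(ρ₁ ⊗ ρ₂) = (1 + C^{A₁|B₁}_{l1}(ρ₁)) (1 + C^{A₂|B₂}_{l1}(ρ₂)). -/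
theorem CIQl1_multiplicative {A₁ B₁ A₂ B₂ : Type*} [Fintype A₁] [Fintype B₁] [Fintype A₂]
    [Fintype B₂] [DecidableEq A₁] [DecidableEq B₁] [DecidableEq A₂] [DecidableEq B₂]
    (ρ₁ : Matrix (A₁ × B₁) (A₁ × B₁) ℂ) (ρ₂ : Matrix (A₂ × B₂) (A₂ × B₂) ℂ)
    (hρ₁ : ρ₁.PosSemidef) (hTr₁ : ρ₁.trace = 1)
    (hρ₂ : ρ₂.PosSemidef) (hTr₂ : ρ₂.trace = 1) :
    1 + CIQl1 (tensBip ρ₁ ρ₂) = (1 + CIQl1 ρ₁) * (1 + CIQl1 ρ₂) := by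
  have hps : (tensBip ρ₁ ρ₂).PosSemidef := by
    have := posSemidef_kron hρ₁ hρ₂
    have he : tensBip ρ₁ ρ₂ =
        (ρ₁ ⊗ₖ ρ₂).submatrix (fun p => ((p.1.1, p.2.1), (p.1.2, p.2.2)))
          (fun p => ((p.1.1, p.2.1), (p.1.2, p.2.2))) := by
      ext p q; rfl
    rw [he]
    exact this.submatrix _
  have hts : (tensBip ρ₁ ρ₂).trace = 1 := by
    have : (tensBip ρ₁ ρ₂).trace = ρ₁.trace * ρ₂.trace := by
      simp [Matrix.trace, Matrix.diag, tensBip, Fintype.sum_prod_type, Finset.sum_mul_sum,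
        mul_comm, mul_assoc, mul_left_comm]
    rw [this, hTr₁, hTr₂, one_mul]
  rw [one_add_CIQl1 hps hts, one_add_CIQl1 hρ₁ hTr₁, one_add_CIQl1 hρ₂ hTr₂]
  simp_rw [blockB_tens, traceNorm_kron, Fintype.sum_prod_type]
  rw [Finset.sum_mul_sum]
  simp_rw [Finset.sum_mul_sum]
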